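/- Let W1, W2 be irreducible graded sl2-representations of dimensions r1, r2 and highest-weight-vector parities w1, w2. Define m := Tr(h on the even part of Hom(W1,W2)^e) + Tr(h on the even part of Hom(W2,W1)^e) − r1·r2, where Hom(Wi,Wj)^e denotes e-equivariant maps (the kernel of the adjoint action of e). Then: m = −min(r1,r2) if r1 ≢ r2 mod 2; m = −2·min(r1,r2) if r1 ≡ r2 ≡ 0 mod 2 and w1 = w2; m = 0 if r1 ≡ r2 ≡ 0 mod 2 and w1 ≠ w2; m = |r1 − r2| − 1 if r1 ≡ r2 ≡ 1 mod 2 and w1 = w2; m = −(r1 + r2 − 1) if r1 ≡ r2 ≡ 1 mod 2 and w1 ≠ w2. -/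

import Mathlib

variable {K V : Type*} [Field K] [AddCommGroup V] [Module K V]

/-- An sl2-triple of linear endomorphisms: [h,e]=2e, [h,f]=-2f, [e,f]=h. -/
def Sl2Rel (e h f : Module.End K V) : Prop :=
  h * e - e * h = 2 • e ∧ h * f - f * h = -(2 • f) ∧ e * f - f * e = h

/-- A submodule invariant under the sl2-action. -/
def Sl2Inv (e h f : Module.End K V) (W : Submodule K V) : Prop :=
  (∀ x ∈ W, e x ∈ W) ∧ (∀ x ∈ W, h x ∈ W) ∧ (∀ x ∈ W, f x ∈ W)

/-- A Z/2Z-grading V = V0 ⊕ V1 compatible with the graded sl2 (h even, e and f odd). -/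
def Sl2Grading (e h f : Module.End K V) (V0 V1 : Submodule K V) : Prop :=
  IsCompl V0 V1 ∧ (∀ x ∈ V0, h x ∈ V0) ∧ (∀ x ∈ V1, h x ∈ V1) ∧
    (∀ x ∈ V0, e x ∈ V1) ∧ (∀ x ∈ V1, e x ∈ V0) ∧
    (∀ x ∈ V0, f x ∈ V1) ∧ (∀ x ∈ V1, f x ∈ V0)

/-- A submodule which is graded with respect to the grading (V0, V1). -/
def Sl2GradedSub (V0 V1 W : Submodule K V) : Prop :=
  W = (W ⊓ V0) ⊔ (W ⊓ V1)


section helpers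

variable {F : Type*} [Field F]

lemma trace_eq_sum_of_eigenbasis {M : Type*} [AddCommGroup M] [Module F M]
    [Module.Finite F M] {ι : Type*} [Fintype ι] [DecidableEq ι]
    (b : Module.Basis ι F M) (T : Module.End F M) (d : ι → F)
    (hd : ∀ i, T (b i) = d i • b i) :
    LinearMap.trace F M T = ∑ i, d i := by
  rw [LinearMap.trace_eq_matrix_trace F b]
  have h : (LinearMap.toMatrix b b) T = Matrix.diagonal d := by
    ext i j
    rw [LinearMap.toMatrix_apply, hd, map_smul, Finsupp.smul_apply, b.repr_self,
      Matrix.diagonal_apply]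
    by_cases hij : i = j <;> simp [hij, Finsupp.single_apply, eq_comm]
  rw [h, Matrix.trace_diagonal]

lemma gauss [CharZero F] (n : ℕ) :
    (2 : F) * ∑ t ∈ Finset.range n, (t : F) = (n : F)^2 - n := by
  induction n with
  | zero => simp
  | succ n ih =>
    rw [Finset.sum_range_succ]
    push_cast
    ring_nf
    ring_nf at ih
    linear_combination ih

lemma filter_parity_sum {M : Type*} [AddCommMonoid M] (g : ℕ → M) (n : ℕ) :
    (∑ j ∈ (Finset.range n).filter (fun j : ℕ => ((j : ZMod 2) = 0)), g j
       = ∑ t ∈ Finset.range ((n+1)/2), g (2*t)) ∧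
    (∑ j ∈ (Finset.range n).filter (fun j : ℕ => ((j : ZMod 2) = 1)), g j
       = ∑ t ∈ Finset.range (n/2), g (2*t+1)) := by
  induction n with
  | zero => simp
  | succ n ih =>
    have hcast : ∀ m : ℕ, ((m : ZMod 2) = 0 ↔ m % 2 = 0) ∧ ((m : ZMod 2) = 1 ↔ m % 2 = 1) := by
      intro m
      constructor
      · rw [show ((0 : ZMod 2)) = ((0 : ℕ) : ZMod 2) by simp, ZMod.natCast_eq_natCast_iff']
      · rw [show ((1 : ZMod 2)) = ((1 : ℕ) : ZMod 2) by simp, ZMod.natCast_eq_natCast_iff']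
    rw [Finset.range_add_one, Finset.filter_insert, Finset.filter_insert]
    rcases Nat.even_or_odd n with he | ho
    · obtain ⟨k, hk⟩ := he
      have h0 : (n : ZMod 2) = 0 := (hcast n).1.mpr (by omega)
      rw [if_pos h0, if_neg (by rw [h0]; decide)]
      rw [Finset.sum_insert (by simp)]
      constructor
      · rw [ih.1, show (n+1+1)/2 = (n+1)/2 + 1 by omega, Finset.sum_range_succ]
        rw [show 2 * ((n+1)/2) = n by omega]
        exact add_comm _ _
      · rw [ih.2, show (n+1)/2 = n/2 by omega]
    · obtain ⟨k, hk⟩ := ho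
      have h1 : (n : ZMod 2) = 1 := (hcast n).2.mpr (by omega)
      rw [if_neg (by rw [h1]; decide), if_pos h1]
      rw [Finset.sum_insert (by simp)]
      constructor
      · rw [ih.1, show (n+1+1)/2 = (n+1)/2 by omega]
      · rw [ih.2, show (n+1)/2 = n/2 + 1 by omega, Finset.sum_range_succ]
        rw [show 2 * (n/2) + 1 = n by omega]
        exact add_comm _ _

end helpers

/-- A normalized basis string for an irreducible graded sl2 module. -/
structure SL2String {F Vv : Type*} [Field F] [AddCommGroup Vv] [Module F Vv]
    (e h : Module.End F Vv) (V0 V1 : Submodule F Vv) (lam : ℕ) (p0 : ZMod 2) where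
  u : ℕ → Vv
  uzero : ∀ j, lam < j → u j = 0
  b : Module.Basis (Fin (lam+1)) F Vv
  hb : ∀ i : Fin (lam+1), b i = u i
  he0 : e (u 0) = 0
  he : ∀ j, j < lam → e (u (j+1)) = u j
  hh : ∀ j, h (u j) = (((lam:F) - 2*j)) • u j
  hpar : ∀ j : ℕ, u j ∈ (if p0 + (j : ZMod 2) = 0 then V0 else V1)

namespace SL2String

variable {F Vv : Type*} [Field F] [AddCommGroup Vv] [Module F Vv]
  {e h : Module.End F Vv} {V0 V1 : Submodule F Vv} {lam : ℕ} {p0 : ZMod 2}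

lemma une (S : SL2String e h V0 V1 lam p0) {j : ℕ} (hj : j ≤ lam) : S.u j ≠ 0 := by
  have := S.b.ne_zero ⟨j, by omega⟩
  rwa [S.hb] at this

/-- iterated action of e on the string -/
lemma hek (S : SL2String e h V0 V1 lam p0) {j : ℕ} (hj : j ≤ lam) (k : ℕ) :
    (e ^ k) (S.u j) = if k ≤ j then S.u (j - k) else 0 := by
  induction k with
  | zero => simp
  | succ k ih =>
    rw [pow_succ', Module.End.mul_apply, ih]
    by_cases hkj : k ≤ j
    · rw [if_pos hkj]
      by_cases hkj' : k + 1 ≤ j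
      · rw [if_pos hkj']
        have h1 : j - k = (j - (k+1)) + 1 := by omega
        rw [h1, S.he _ (by omega)]
      · rw [if_neg hkj']
        have h1 : j - k = 0 := by omega
        rw [h1, S.he0]
    · rw [if_neg hkj, if_neg (by omega), map_zero]

/-- the parity components are spanned by the corresponding basis vectors -/
lemma span_par (S : SL2String e h V0 V1 lam p0) (hc : IsCompl V0 V1) (ε : ZMod 2) :
    (if ε = 0 then V0 else V1) ≤
      Submodule.span F {x | ∃ j : ℕ, p0 + (j : ZMod 2) = ε ∧ x = S.u j} := by
  set P : ZMod 2 → Submodule F Vv := fun δ =>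
    Submodule.span F {x | ∃ j : ℕ, p0 + (j : ZMod 2) = δ ∧ x = S.u j} with hP
  have hPle : ∀ δ, P δ ≤ (if δ = 0 then V0 else V1) := by
    intro δ
    apply Submodule.span_le.mpr
    rintro x ⟨j, hj, rfl⟩
    have := S.hpar j
    rw [hj] at this
    exact this
  have hsup : P 0 ⊔ P 1 = ⊤ := by
    rw [eq_top_iff]
    intro x _
    have hx : x ∈ Submodule.span F (Set.range S.b) := by
      rw [S.b.span_eq]; trivial
    refine Submodule.span_le.mpr ?_ hx
    rintro y ⟨i, rfl⟩
    rw [S.hb]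
    rcases (by decide : ∀ a : ZMod 2, a = 0 ∨ a = 1) (p0 + ((i:ℕ) : ZMod 2)) with h0 | h1
    · exact Submodule.mem_sup_left (Submodule.subset_span ⟨i, h0, rfl⟩)
    · exact Submodule.mem_sup_right (Submodule.subset_span ⟨i, h1, rfl⟩)
  intro x hx
  obtain ⟨a, ha, bb, hbb, rfl⟩ := Submodule.mem_sup.mp (hsup ▸ Submodule.mem_top (x := x))
  rcases (by decide : ∀ a : ZMod 2, a = 0 ∨ a = 1) ε with rfl | rfl
  · -- x ∈ V0, a ∈ P0 ≤ V0, bb ∈ P1 ≤ V1, so bb ∈ V0 ⊓ V1 = ⊥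
    have hb1 : bb ∈ V1 := by have := hPle 1 hbb; simpa using this
    have ha0 : a ∈ V0 := by have := hPle 0 ha; simpa using this
    have hbb0 : bb ∈ V0 := by
      have : a + bb - a ∈ V0 := Submodule.sub_mem _ (by simpa using hx) ha0
      simpa using this
    have : bb = 0 := by
      have := hc.disjoint.le_bot (Submodule.mem_inf.mpr ⟨hbb0, hb1⟩)
      simpa using this
    simpa [this] using ha
  · have hb1 : bb ∈ V1 := by have := hPle 1 hbb; simpa using this
    have ha0 : a ∈ V0 := by have := hPle 0 ha; simpa using this
    have ha1 : a ∈ V1 := by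
      have : a + bb - bb ∈ V1 := Submodule.sub_mem _ (by simpa using hx) hb1
      simpa using this
    have : a = 0 := by
      have := hc.disjoint.le_bot (Submodule.mem_inf.mpr ⟨ha0, ha1⟩)
      simpa using this
    simpa [this] using hbb

end SL2String


open Module in
lemma sl2string_exists {F Vv : Type*} [Field F] [CharZero F] [AddCommGroup Vv] [Module F Vv]
    [FiniteDimensional F Vv]
    (e h f : Module.End F Vv) (hrel : Sl2Rel e h f)
    (V0 V1 : Submodule F Vv) (hgr : Sl2Grading e h f V0 V1)
    (hirr : ∀ U : Submodule F Vv, Sl2Inv e h f U → U = ⊥ ∨ U = ⊤)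
    (lam : ℕ) (p0 : ZMod 2) (v : Vv) (hv : v ≠ 0) (hve : e v = 0)
    (hvh : h v = (lam : F) • v) (hvp : v ∈ (if p0 = 0 then V0 else V1)) :
    Nonempty (SL2String e h V0 V1 lam p0) := by
  classical
  obtain ⟨hrel1, hrel2, hrel3⟩ := hrel
  have hef : ∀ x, e (f x) = f (e x) + h x := by
    intro x
    have h1 := LinearMap.congr_fun hrel3 x
    simp only [LinearMap.sub_apply, Module.End.mul_apply] at h1
    have h2 := sub_eq_iff_eq_add.mp h1
    linear_combination (norm := abel) h2
  have hhf : ∀ x, h (f x) = f (h x) - (2:F) • f x := by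
    intro x
    have h1 := LinearMap.congr_fun hrel2 x
    simp only [LinearMap.sub_apply, Module.End.mul_apply, LinearMap.neg_apply,
      LinearMap.smul_apply] at h1
    have h3 := sub_eq_iff_eq_add.mp h1
    rw [h3, ← Nat.cast_smul_eq_nsmul F 2 (f x)]
    push_cast
    abel
  have hfsucc : ∀ j : ℕ, (f^(j+1)) v = f ((f^j) v) := by
    intro j; rw [pow_succ', Module.End.mul_apply]
  have heig : ∀ j : ℕ, h ((f^j) v) = ((lam:F) - 2*j) • (f^j) v := by
    intro j
    induction j with
    | zero => simpa using hvh
    | succ j ih =>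
      rw [hfsucc, hhf, ih, map_smul, ← hfsucc, ← sub_smul]
      congr 1
      push_cast
      ring
  have hlow : ∀ j : ℕ, e ((f^(j+1)) v) = (((j:F)+1) * ((lam:F) - j)) • (f^j) v := by
    intro j
    induction j with
    | zero => simp [hfsucc, hef, hve, hvh]
    | succ j ih =>
      rw [hfsucc, hef, ih, map_smul, ← hfsucc, heig, ← add_smul]
      congr 1
      push_cast
      ring
  have hindep : ∀ (n : ℕ) (x : Fin n → Vv), (∀ i, h (x i) = ((lam:F) - 2*(i:ℕ)) • x i) →
      (∀ i, x i ≠ 0) → LinearIndependent F x := by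
    intro n x hx hnz
    refine Module.End.eigenvectors_linearIndependent' h
      (fun i : Fin n => ((lam:F) - 2*(i:ℕ))) ?_ x ?_
    · intro i j hij
      have hij2 : (lam:F) - 2*((i:ℕ):F) = (lam:F) - 2*((j:ℕ):F) := hij
      have h2 : ((i:ℕ):F) = ((j:ℕ):F) := by linear_combination (-(1:F)/2) * hij2
      exact Fin.ext (Nat.cast_injective h2)
    · intro i
      exact ⟨Module.End.mem_eigenspace_iff.mpr (hx i), hnz i⟩
  have hzero : ∃ j : ℕ, (f^j) v = 0 := by
    by_contra hc
    push_neg at hc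
    set d := Module.finrank F Vv with hd
    have hli : LinearIndependent F (fun i : Fin (d+1) => (f^(i:ℕ)) v) :=
      hindep _ _ (fun i => heig i) (fun i => hc i)
    have := hli.fintype_card_le_finrank
    simp only [Fintype.card_fin] at this
    omega
  set n := Nat.find hzero with hnd
  have hn : (f^n) v = 0 := Nat.find_spec hzero
  have hmin : ∀ m, m < n → (f^m) v ≠ 0 := fun m hm => Nat.find_min hzero hm
  have hn0 : n ≠ 0 := by
    intro h0
    rw [h0] at hn
    simp at hn
    exact hv hn
  obtain ⟨k, hk⟩ : ∃ k, n = k + 1 := ⟨n - 1, by omega⟩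
  have hkzero : (((k:F)+1) * ((lam:F) - k)) • (f^k) v = 0 := by
    rw [← hlow k, ← hk, hn, map_zero]
  have hlamk : lam = k := by
    have hfk : (f^k) v ≠ 0 := hmin k (by omega)
    rcases smul_eq_zero.mp hkzero with hc | hc
    · rcases mul_eq_zero.mp hc with hc1 | hc2
      · exfalso
        have : ((k:F)+1) ≠ 0 := by
          have := Nat.cast_add_one_ne_zero (R := F) k
          push_cast at this ⊢
          exact this
        exact this hc1
      · exact Nat.cast_injective (sub_eq_zero.mp hc2)
    · exact absurd hc hfk
  have hftop : (f^(lam+1)) v = 0 := by rw [← hlamk] at hk; rw [← hk]; exact hn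
  have hfne : ∀ j, j ≤ lam → (f^j) v ≠ 0 := by
    intro j hj
    exact hmin j (by omega)
  have hfzero : ∀ j, lam < j → (f^j) v = 0 := by
    intro j hj
    have : f^j = f^(j - (lam+1)) * f^(lam+1) := by
      rw [← pow_add]
      congr 1
      omega
    rw [this, Module.End.mul_apply, hftop, map_zero]
  -- normalization constants
  set γ : ℕ → F := fun j => ∏ i ∈ Finset.range j, (((i:F)+1) * ((lam:F) - i)) with hγd
  have hγne : ∀ j, j ≤ lam → γ j ≠ 0 := by
    intro j hj
    apply Finset.prod_ne_zero_iff.mpr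
    intro i hi
    simp only [Finset.mem_range] at hi
    apply mul_ne_zero
    · have := Nat.cast_add_one_ne_zero (R := F) i
      push_cast at this ⊢
      exact this
    · rw [sub_ne_zero]
      intro hc
      have := Nat.cast_injective hc
      omega
  have hγsucc : ∀ j, γ (j+1) = γ j * (((j:F)+1) * ((lam:F) - j)) := by
    intro j
    exact Finset.prod_range_succ _ j
  set u : ℕ → Vv := fun j => if j ≤ lam then (γ j)⁻¹ • (f^j) v else 0 with hud
  have hu0 : u 0 = v := by simp [hud, hγd]
  have hule : ∀ j, j ≤ lam → u j = (γ j)⁻¹ • (f^j) v := by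
    intro j hj; simp [hud, hj]
  have huzero : ∀ j, lam < j → u j = 0 := by
    intro j hj; simp [hud, Nat.not_le.mpr hj]
  have hune : ∀ j, j ≤ lam → u j ≠ 0 := by
    intro j hj
    rw [hule j hj]
    exact smul_ne_zero (inv_ne_zero (hγne j hj)) (hfne j hj)
  have huh : ∀ j : ℕ, h (u j) = ((lam:F) - 2*j) • u j := by
    intro j
    by_cases hj : j ≤ lam
    · rw [hule j hj, map_smul, heig, smul_comm]
    · rw [huzero j (by omega), map_zero, smul_zero]
  have hue0 : e (u 0) = 0 := by rw [hu0, hve]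
  have hue : ∀ j, j < lam → e (u (j+1)) = u j := by
    intro j hj
    rw [hule (j+1) (by omega), hule j (by omega), map_smul, hlow, smul_smul, hγsucc]
    congr 1
    have hc : (((j:F)+1) * ((lam:F) - j)) ≠ 0 := by
      apply mul_ne_zero
      · have := Nat.cast_add_one_ne_zero (R := F) j
        push_cast at this ⊢
        exact this
      · rw [sub_ne_zero]
        intro hcc
        have := Nat.cast_injective hcc
        omega
    rw [mul_inv, mul_assoc, inv_mul_cancel₀ hc, mul_one]
  -- parity
  have hfpar : ∀ j : ℕ, (f^j) v ∈ (if p0 + (j : ZMod 2) = 0 then V0 else V1) := by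
    intro j
    induction j with
    | zero => simpa using hvp
    | succ j ih =>
      obtain ⟨-, -, -, -, -, hf01, hf10⟩ := hgr
      rw [hfsucc]
      have hcast : ((j+1 : ℕ) : ZMod 2) = ((j:ℕ) : ZMod 2) + 1 := by push_cast; ring
      rw [hcast, ← add_assoc]
      rcases (by decide : ∀ a : ZMod 2, a = 0 ∨ a = 1) (p0 + ((j:ℕ) : ZMod 2)) with h0 | h1
      · rw [h0] at ih ⊢
        rw [if_pos rfl] at ih
        rw [if_neg (by decide)]
        exact hf01 _ ih
      · rw [h1] at ih ⊢
        rw [if_neg (by decide)] at ih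
        rw [if_pos (by decide)]
        exact hf10 _ ih
  have hupar : ∀ j : ℕ, u j ∈ (if p0 + (j : ZMod 2) = 0 then V0 else V1) := by
    intro j
    by_cases hj : j ≤ lam
    · rw [hule j hj]
      exact Submodule.smul_mem _ _ (hfpar j)
    · rw [huzero j (by omega)]
      exact Submodule.zero_mem _
  -- basis
  set x : Fin (lam+1) → Vv := fun i => u i with hxd
  have hxind : LinearIndependent F x :=
    hindep _ _ (fun i => huh i) (fun i => hune i (by omega))
  set U : Submodule F Vv := Submodule.span F (Set.range x) with hUd
  have hmem : ∀ i : Fin (lam+1), u (i:ℕ) ∈ U := fun i =>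
    Submodule.subset_span ⟨i, rfl⟩
  have hmapmem : ∀ (T : Module.End F Vv), (∀ i, T (x i) ∈ U) → ∀ y ∈ U, T y ∈ U := by
    intro T hT y hy
    have hle : U ≤ Submodule.comap T U := by
      rw [hUd, Submodule.span_le]
      rintro z ⟨i, rfl⟩
      exact hT i
    exact hle hy
  have hUinv : Sl2Inv e h f U := by
    refine ⟨hmapmem e ?_, hmapmem h ?_, hmapmem f ?_⟩
    · intro i
      rcases Nat.eq_zero_or_eq_succ_pred (i:ℕ) with h0 | hs
      · simp only [hxd, h0, hue0]
        exact Submodule.zero_mem _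
      · have hi : (i:ℕ) = ((i:ℕ)-1) + 1 := hs
        have hlt : (i:ℕ) - 1 < lam := by
          have := i.isLt
          omega
        simp only [hxd]
        rw [hi, hue _ hlt]
        exact Submodule.subset_span ⟨⟨(i:ℕ)-1, by omega⟩, rfl⟩
    · intro i
      simp only [hxd]
      rw [huh]
      exact Submodule.smul_mem _ _ (hmem i)
    · intro i
      by_cases hi : (i:ℕ) < lam
      · have : f (u (i:ℕ)) = ((γ (i:ℕ))⁻¹ * γ ((i:ℕ)+1)) • u ((i:ℕ)+1) := by
          rw [hule _ (by omega), hule _ (by omega), map_smul, ← hfsucc, smul_smul]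
          congr 1
          rw [mul_assoc, mul_inv_cancel₀ (hγne _ (by omega)), mul_one]
        simp only [hxd]
        rw [this]
        exact Submodule.smul_mem _ _ (Submodule.subset_span ⟨⟨(i:ℕ)+1, by omega⟩, rfl⟩)
      · have hi' : (i:ℕ) = lam := by have := i.isLt; omega
        simp only [hxd]
        rw [hule _ (by omega), map_smul, ← hfsucc, hi', hftop, smul_zero]
        exact Submodule.zero_mem _
  have hUtop : U = ⊤ := by
    rcases hirr U hUinv with hbot | htop
    · exfalso
      have : u 0 ∈ U := hmem ⟨0, by omega⟩
      rw [hbot] at this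
      simp only [Submodule.mem_bot] at this
      rw [hu0] at this
      exact hv this
    · exact htop
  refine ⟨⟨u, huzero, Module.Basis.mk hxind (by rw [← hUd, hUtop]), ?_, hue0, hue, huh, hupar⟩⟩
  intro i
  rw [Module.Basis.mk_apply]


open LinearMap in
lemma homE_trace {F Vv W : Type*} [Field F] [CharZero F]
    [AddCommGroup Vv] [Module F Vv] [FiniteDimensional F Vv]
    [AddCommGroup W] [Module F W] [FiniteDimensional F W]
    {eV hV : Module.End F Vv} {V0 V1 : Submodule F Vv} {lam1 : ℕ} {w1 : ZMod 2}
    {eW hW : Module.End F W} {W0 W1 : Submodule F W} {lam2 : ℕ} {w2 : ZMod 2}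
    (SV : SL2String eV hV V0 V1 lam1 w1) (SW : SL2String eW hW W0 W1 lam2 w2)
    (hcV : IsCompl V0 V1) (hcW : IsCompl W0 W1)
    (H12 : Module.End F (Vv →ₗ[F] W)) (hH12 : ∀ φ, H12 φ = hW ∘ₗ φ - φ ∘ₗ hV)
    (E12 : Submodule F (Vv →ₗ[F] W))
    (hE12 : ∀ φ : Vv →ₗ[F] W, φ ∈ E12 ↔
      (eW ∘ₗ φ - φ ∘ₗ eV = 0 ∧ (∀ x ∈ V0, φ x ∈ W0) ∧ (∀ x ∈ V1, φ x ∈ W1)))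
    (hinv12 : ∀ φ ∈ E12, H12 φ ∈ E12) :
    LinearMap.trace F _ (H12.restrict hinv12) =
      ∑ j ∈ (Finset.range (min (lam1+1) (lam2+1))).filter
          (fun j : ℕ => ((j : ZMod 2) = w1 + w2 + (lam1 : ZMod 2))),
        (((lam1:F) + (lam2:F)) - 2*(j:F)) := by
  classical
  have hzmod : ∀ a : ZMod 2, a + a = 0 := by decide
  have hzmod2 : ∀ a b : ZMod 2, a ≠ b → a = b + 1 := by decide
  have hzmod3 : ∀ a b c : ZMod 2, (a + b = c) ↔ (b = a + c) := by decide
  set S : Finset ℕ := (Finset.range (min (lam1+1) (lam2+1))).filter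
      (fun j : ℕ => ((j : ZMod 2) = w1 + w2 + (lam1 : ZMod 2))) with hSdef
  have hSmem : ∀ j ∈ S, j ≤ lam1 ∧ j ≤ lam2 ∧ ((j : ZMod 2) = w1 + w2 + (lam1 : ZMod 2)) := by
    intro j hj
    rw [hSdef, Finset.mem_filter, Finset.mem_range] at hj
    exact ⟨by omega, by omega, hj.2⟩
  -- the eigenvector maps
  set φf : ℕ → (Vv →ₗ[F] W) := fun j => SV.b.constr F
      (fun i : Fin (lam1+1) => if lam1 ≤ j + (i:ℕ) then SW.u (j + (i:ℕ) - lam1) else 0)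
    with hφdef
  have hφu : ∀ j (k : ℕ), k ≤ lam1 →
      φf j (SV.u k) = if lam1 ≤ j + k then SW.u (j + k - lam1) else 0 := by
    intro j k hk
    have h1 : SV.u k = SV.b ⟨k, by omega⟩ := (SV.hb ⟨k, by omega⟩).symm
    rw [h1, hφdef]
    exact SV.b.constr_basis F _ ⟨k, by omega⟩
  -- e-equivariance
  have heq : ∀ j : ℕ, j ≤ lam1 → j ≤ lam2 → eW ∘ₗ φf j - φf j ∘ₗ eV = 0 := by
    intro j hj1 hj2
    rw [sub_eq_zero]
    apply SV.b.ext
    intro i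
    rw [SV.hb]
    simp only [LinearMap.comp_apply]
    have hi : (i:ℕ) ≤ lam1 := by have := i.isLt; omega
    rcases Nat.eq_zero_or_pos (i:ℕ) with h0 | hpos
    · rw [h0, SV.he0, map_zero, hφu j 0 (by omega)]
      by_cases hc : lam1 ≤ j + 0
      · have hj' : j = lam1 := by omega
        rw [if_pos hc]
        have : j + 0 - lam1 = 0 := by omega
        rw [this, SW.he0]
      · rw [if_neg hc, map_zero]
    · have hi1 : (i:ℕ) = ((i:ℕ) - 1) + 1 := by omega
      have hev : eV (SV.u (i:ℕ)) = SV.u ((i:ℕ) - 1) := by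
        rw [hi1]
        exact SV.he _ (by omega)
      rw [hev, hφu j _ hi, hφu j _ (by omega)]
      by_cases hc : lam1 ≤ j + (i:ℕ)
      · rw [if_pos hc]
        by_cases hc2 : lam1 ≤ j + ((i:ℕ) - 1)
        · rw [if_pos hc2]
          have hm : j + (i:ℕ) - lam1 = (j + ((i:ℕ)-1) - lam1) + 1 := by omega
          rw [hm]
          exact SW.he _ (by omega)
        · rw [if_neg hc2]
          have hm : j + (i:ℕ) - lam1 = 0 := by omega
          rw [hm, SW.he0]
      · rw [if_neg hc, if_neg (by omega), map_zero]
  -- grading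
  have hgrad : ∀ j : ℕ, j ≤ lam1 → j ≤ lam2 → ((j : ZMod 2) = w1 + w2 + (lam1 : ZMod 2)) →
      (∀ x ∈ V0, φf j x ∈ W0) ∧ (∀ x ∈ V1, φf j x ∈ W1) := by
    intro j hj1 hj2 hjpar
    have hgen : ∀ (ε : ZMod 2) (k : ℕ), w1 + (k : ZMod 2) = ε →
        φf j (SV.u k) ∈ (if ε = 0 then W0 else W1) := by
      intro ε k hk
      by_cases hklam : k ≤ lam1
      · rw [hφu j k hklam]
        by_cases hc : lam1 ≤ j + k
        · rw [if_pos hc]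
          have hpar := SW.hpar (j + k - lam1)
          have hcast : ((j + k - lam1 : ℕ) : ZMod 2) =
              (j : ZMod 2) + (k : ZMod 2) + (lam1 : ZMod 2) := by
            have h1 : ((j + k - lam1 : ℕ) : ZMod 2) + ((lam1 : ℕ) : ZMod 2)
                = ((j + k : ℕ) : ZMod 2) := by
              rw [← Nat.cast_add]
              congr 1
              omega
            push_cast at h1
            linear_combination h1 - hzmod (lam1 : ZMod 2)
          have hper : w2 + ((j + k - lam1 : ℕ) : ZMod 2) = ε := by
            rw [hcast, hjpar]
            linear_combination hk + hzmod (w2 : ZMod 2) + hzmod ((lam1 : ZMod 2))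
          rw [hper] at hpar
          exact hpar
        · rw [if_neg hc]
          exact Submodule.zero_mem _
      · rw [SV.uzero k (by omega), map_zero]
        exact Submodule.zero_mem _
    constructor
    · intro x hx
      have hle := SV.span_par hcV 0
      rw [if_pos rfl] at hle
      have hsp : Submodule.span F {x | ∃ k : ℕ, w1 + (k : ZMod 2) = 0 ∧ x = SV.u k}
          ≤ Submodule.comap (φf j) W0 := by
        apply Submodule.span_le.mpr
        rintro z ⟨k, hkpar, rfl⟩
        have := hgen 0 k hkpar
        rw [if_pos rfl] at this
        exact this
      exact hsp (hle hx)
    · intro x hx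
      have hle := SV.span_par hcV 1
      rw [if_neg (by decide)] at hle
      have hsp : Submodule.span F {x | ∃ k : ℕ, w1 + (k : ZMod 2) = 1 ∧ x = SV.u k}
          ≤ Submodule.comap (φf j) W1 := by
        apply Submodule.span_le.mpr
        rintro z ⟨k, hkpar, rfl⟩
        have := hgen 1 k hkpar
        rw [if_neg (by decide)] at this
        exact this
      exact hsp (hle hx)
  -- membership in E12
  have hφmem : ∀ j ∈ S, φf j ∈ E12 := by
    intro j hj
    obtain ⟨hj1, hj2, hjp⟩ := hSmem j hj
    rw [hE12]
    exact ⟨heq j hj1 hj2, (hgrad j hj1 hj2 hjp).1, (hgrad j hj1 hj2 hjp).2⟩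
  -- eigenvector property
  have heigv : ∀ j : ℕ, j ≤ lam1 → j ≤ lam2 →
      H12 (φf j) = (((lam1:F) + (lam2:F)) - 2*(j:F)) • φf j := by
    intro j hj1 hj2
    apply SV.b.ext
    intro i
    rw [SV.hb, hH12]
    have hi : (i:ℕ) ≤ lam1 := by have := i.isLt; omega
    simp only [LinearMap.sub_apply, LinearMap.comp_apply, LinearMap.smul_apply]
    rw [SV.hh, map_smul, hφu j _ hi]
    by_cases hc : lam1 ≤ j + (i:ℕ)
    · rw [if_pos hc, SW.hh, ← sub_smul]
      congr 1
      have hcst : ((j + (i:ℕ) - lam1 : ℕ) : F) = (j:F) + ((i:ℕ):F) - (lam1:F) := by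
        rw [Nat.cast_sub hc]
        push_cast
        ring
      rw [hcst]
      push_cast
      ring
    · rw [if_neg hc]
      simp
  -- evaluation at the lowest vector
  have hφlow : ∀ j : ℕ, j ≤ lam2 → φf j (SV.u lam1) = SW.u j := by
    intro j hj
    rw [hφu j lam1 le_rfl, if_pos (by omega)]
    congr 1
    omega
  -- linear independence of the family
  have hindφ : LinearIndependent F (fun j : {x // x ∈ S} => φf (j:ℕ)) := by
    apply LinearIndependent.of_comp (LinearMap.applyₗ (SV.u lam1))
    have hfun : (⇑(LinearMap.applyₗ (SV.u lam1)) ∘ fun j : {x // x ∈ S} => φf (j:ℕ))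
        = fun j : {x // x ∈ S} => SW.u (j:ℕ) := by
      funext j
      show φf (j:ℕ) (SV.u lam1) = SW.u (j:ℕ)
      exact hφlow _ (hSmem _ j.2).2.1
    rw [hfun]
    have hmap : ∀ j : {x // x ∈ S}, SW.u (j:ℕ) = SW.b ⟨(j:ℕ), by
        have := (hSmem _ j.2).2.1; omega⟩ := by
      intro j
      rw [SW.hb]
    have hinj : Function.Injective (fun j : {x // x ∈ S} =>
        (⟨(j:ℕ), by have := (hSmem _ j.2).2.1; omega⟩ : Fin (lam2+1))) := by
      intro a b hab
      apply Subtype.ext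
      simpa [Fin.mk.injEq] using hab
    have := SW.b.linearIndependent.comp _ hinj
    convert this using 1
    funext j
    rw [hmap]
    rfl
    rfl
  -- spanning: every element of E12 is a combination of the φf j
  have hspan : ∀ ψ : Vv →ₗ[F] W, ψ ∈ E12 →
      ∃ A : ℕ → F, ψ = ∑ j ∈ S, A j • φf j := by
    intro ψ hψ
    obtain ⟨hψe, hψ0, hψ1⟩ := (hE12 ψ).mp hψ
    rw [sub_eq_zero] at hψe
    have hψe' : ∀ x, eW (ψ x) = ψ (eV x) := by
      intro x
      exact LinearMap.congr_fun hψe x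
    set y : W := ψ (SV.u lam1) with hydef
    have hpow : ∀ k : ℕ, (eW ^ k) y = ψ ((eV ^ k) (SV.u lam1)) := by
      intro k
      induction k with
      | zero => simp [hydef]
      | succ k ih => rw [pow_succ', pow_succ', Module.End.mul_apply, ih, Module.End.mul_apply, hψe']
    have hiter : ∀ i : ℕ, i ≤ lam1 → ψ (SV.u i) = (eW ^ (lam1 - i)) y := by
      intro i hi
      rw [hpow, SV.hek le_rfl, if_pos (by omega), show lam1 - (lam1 - i) = i from by omega]
    have hytop : (eW ^ (lam1 + 1)) y = 0 := by
      rw [hpow, SV.hek le_rfl, if_neg (by omega), map_zero]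
    set α := SW.b.repr y with hαdef
    have hyrepr : y = ∑ i : Fin (lam2+1), α i • SW.u (i:ℕ) := by
      conv_lhs => rw [← SW.b.sum_repr y]
      refine Finset.sum_congr rfl ?_
      intro i _
      rw [SW.hb]
    -- coefficients vanish above lam1
    have hstep : ∀ i : Fin (lam2+1), lam1 < (i:ℕ) →
        (∀ k : Fin (lam2+1), (i:ℕ) < (k:ℕ) → α k = 0) → α i = 0 := by
      intro i hi hk
      have hA : (eW ^ (i:ℕ)) y = 0 := by
        have hsplit : eW ^ (i:ℕ) = eW ^ ((i:ℕ) - (lam1+1)) * eW ^ (lam1+1) := by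
          rw [← pow_add]
          congr 1
          omega
        rw [hsplit, Module.End.mul_apply, hytop, map_zero]
      have hB : (eW ^ (i:ℕ)) y = α i • SW.u 0 := by
        rw [hyrepr, map_sum]
        rw [Finset.sum_eq_single i]
        · rw [map_smul, SW.hek (by omega : (i:ℕ) ≤ lam2), if_pos le_rfl, Nat.sub_self]
        · intro k _ hki
          rw [map_smul, SW.hek (by omega : (k:ℕ) ≤ lam2)]
          by_cases hik : (i:ℕ) ≤ (k:ℕ)
          · have : (i:ℕ) < (k:ℕ) := by
              rcases Nat.lt_or_ge (i:ℕ) (k:ℕ) with h | h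
              · exact h
              · exfalso; exact hki (Fin.ext (by omega))
            rw [hk k this, zero_smul]
          · rw [if_neg hik, smul_zero]
        · intro h
          exact absurd (Finset.mem_univ i) h
      rw [hA] at hB
      rcases smul_eq_zero.mp hB.symm with h | h
      · exact h
      · exact absurd h (SW.une (by omega))
    have hbig : ∀ i : Fin (lam2+1), lam1 < (i:ℕ) → α i = 0 := by
      have key : ∀ d : ℕ, ∀ i : Fin (lam2+1), lam2 - (i:ℕ) ≤ d → lam1 < (i:ℕ) → α i = 0 := by
        intro d
        induction d with
        | zero =>
          intro i hle hlt
          refine hstep i hlt ?_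
          intro k hk
          exfalso
          have := k.isLt
          omega
        | succ d ih =>
          intro i hle hlt
          refine hstep i hlt ?_
          intro k hk
          exact ih k (by omega) (by omega)
      intro i hi
      exact key lam2 i (by omega) hi
    -- coefficients vanish for the wrong parity
    have hparc : ∀ i : Fin (lam2+1),
        w2 + ((i:ℕ) : ZMod 2) ≠ w1 + (lam1 : ZMod 2) → α i = 0 := by
      set p : ZMod 2 := w1 + (lam1 : ZMod 2) with hpdef
      set πW : ZMod 2 → Submodule F W := fun q => if q = 0 then W0 else W1 with hπdef
      have hπ : ∀ q, (if q = 0 then W0 else W1) = πW q := fun q => by rw [hπdef]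
      have hπ0 : πW 0 = W0 := by simp [hπdef]
      have hπ1 : πW 1 = W1 := by simp [hπdef]
      have hWpar : ∀ q (z : W), z ∈ πW q → z ∈ πW (q+1) → z = 0 := by
        intro q z h1 h2
        rcases (by decide : ∀ a : ZMod 2, a = 0 ∨ a = 1) q with rfl | rfl
        · rw [hπ0] at h1
          rw [show (0:ZMod 2)+1 = 1 from by decide, hπ1] at h2
          have := hcW.disjoint.le_bot (Submodule.mem_inf.mpr ⟨h1, h2⟩)
          simpa using this
        · rw [hπ1] at h1
          rw [show (1:ZMod 2)+1 = 0 from by decide, hπ0] at h2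
          have := hcW.disjoint.le_bot (Submodule.mem_inf.mpr ⟨h2, h1⟩)
          simpa using this
      have hy : y ∈ πW p := by
        have hvpar := SV.hpar lam1
        rcases (by decide : ∀ a : ZMod 2, a = 0 ∨ a = 1) p with h0 | h1
        · rw [h0, hπ0]
          rw [← hpdef, h0, if_pos rfl] at hvpar
          exact hψ0 _ hvpar
        · rw [h1, hπ1]
          rw [← hpdef, h1, if_neg (by decide)] at hvpar
          exact hψ1 _ hvpar
      set T : Finset (Fin (lam2+1)) :=
        Finset.univ.filter (fun i => w2 + ((i:ℕ) : ZMod 2) = p) with hTdef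
      set y0 : W := ∑ i ∈ T, α i • SW.u (i:ℕ) with hy0def
      set y1 : W := ∑ i ∈ Finset.univ.filter (fun i : Fin (lam2+1) =>
        ¬(w2 + ((i:ℕ) : ZMod 2) = p)), α i • SW.u (i:ℕ) with hy1def
      have hsplit : y = y0 + y1 := by
        rw [hy0def, hy1def, hTdef, Finset.sum_filter_add_sum_filter_not, ← hyrepr]
      have hy0 : y0 ∈ πW p := by
        apply Submodule.sum_mem
        intro i hi
        rw [hTdef, Finset.mem_filter] at hi
        apply Submodule.smul_mem
        have hpar := SW.hpar (i:ℕ)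
        rw [hπ, hi.2] at hpar
        exact hpar
      have hy1 : y1 ∈ πW (p+1) := by
        apply Submodule.sum_mem
        intro i hi
        rw [Finset.mem_filter] at hi
        apply Submodule.smul_mem
        have hpar := SW.hpar (i:ℕ)
        rw [hπ, hzmod2 _ _ hi.2] at hpar
        exact hpar
      have hy1mem : y1 ∈ πW p := by
        have h1 : y1 = y - y0 := by rw [hsplit]; abel
        rw [h1]
        exact Submodule.sub_mem _ hy hy0
      have hy1z : y1 = 0 := hWpar p y1 hy1mem hy1
      intro i0 hi0
      have hrepr1 : SW.b.repr y1 i0 = α i0 := by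
        rw [hy1def, map_sum, Finsupp.finset_sum_apply]
        rw [Finset.sum_eq_single i0]
        · rw [map_smul, ← SW.hb, SW.b.repr_self]
          simp
        · intro k _ hki
          rw [map_smul, ← SW.hb, SW.b.repr_self]
          simp [Finsupp.single_apply, hki]
        · intro h
          rw [Finset.mem_filter] at h
          push_neg at h
          have := h (Finset.mem_univ i0)
          exact absurd hi0 (by simpa using this)
      rw [hy1z, map_zero] at hrepr1
      simpa using hrepr1.symm
    classical
    set A : ℕ → F := fun j => if hj : j < lam2 + 1 then α ⟨j, hj⟩ else 0 with hAdef
    refine ⟨A, ?_⟩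
    apply SV.b.ext
    intro i
    rw [SV.hb]
    have hi : (i:ℕ) ≤ lam1 := by have := i.isLt; omega
    rw [LinearMap.sum_apply]
    have hL : ψ (SV.u (i:ℕ)) = ∑ k ∈ Finset.range (lam2+1),
        A k • (if lam1 ≤ k + (i:ℕ) then SW.u (k + (i:ℕ) - lam1) else 0) := by
      rw [hiter _ hi, hyrepr, map_sum]
      have hterm : ∀ k : Fin (lam2+1), (eW ^ (lam1 - (i:ℕ))) (α k • SW.u (k:ℕ))
          = A (k:ℕ) • (if lam1 ≤ (k:ℕ) + (i:ℕ) then SW.u ((k:ℕ) + (i:ℕ) - lam1) else 0) := by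
        intro k
        rw [map_smul, SW.hek (by omega : (k:ℕ) ≤ lam2)]
        have hAk : A (k:ℕ) = α k := by simp [hAdef, k.isLt]; intro h; have := k.isLt; omega
        rw [hAk]
        congr 1
        by_cases hc : lam1 - (i:ℕ) ≤ (k:ℕ)
        · rw [if_pos hc, if_pos (by omega)]
          congr 1
          omega
        · rw [if_neg hc, if_neg (by omega)]
      rw [Finset.sum_congr rfl (fun k _ => hterm k)]
      exact Fin.sum_univ_eq_sum_range
        (fun k => A k • (if lam1 ≤ k + (i:ℕ) then SW.u (k + (i:ℕ) - lam1) else 0)) (lam2+1)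
    rw [hL]
    have hR : ∀ j ∈ S, (A j • φf j) (SV.u (i:ℕ))
        = A j • (if lam1 ≤ j + (i:ℕ) then SW.u (j + (i:ℕ) - lam1) else 0) := by
      intro j hj
      rw [LinearMap.smul_apply, hφu j _ hi]
    rw [Finset.sum_congr rfl hR]
    symm
    apply Finset.sum_subset
    · intro j hj
      rw [hSdef, Finset.mem_filter, Finset.mem_range] at hj
      rw [Finset.mem_range]
      omega
    · intro k hk hknot
      have hk2 : k < lam2 + 1 := Finset.mem_range.mp hk
      have hA0 : A k = 0 := by
        rw [hAdef]
        simp only [dif_pos hk2]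
        by_cases hkl : k ≤ lam1
        · apply hparc
          intro hcon
          apply hknot
          rw [hSdef, Finset.mem_filter, Finset.mem_range]
          refine ⟨by omega, ?_⟩
          have h3 := (hzmod3 w2 ((k:ℕ) : ZMod 2) (w1 + (lam1 : ZMod 2))).mp (by
            simpa using hcon)
          rw [h3]
          ring
        · exact hbig ⟨k, hk2⟩ (by simpa using Nat.lt_of_not_le hkl)
      rw [hA0, zero_smul]
  -- build the eigenbasis of E12 and compute the trace
  have hfammem : ∀ j : {x // x ∈ S}, φf (j:ℕ) ∈ E12 := fun j => hφmem _ j.2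
  set fam : {x // x ∈ S} → E12 := fun j => ⟨φf (j:ℕ), hfammem j⟩ with hfamdef
  have hfamind : LinearIndependent F fam := by
    apply LinearIndependent.of_comp E12.subtype
    exact hindφ
  have hfamspan : ⊤ ≤ Submodule.span F (Set.range fam) := by
    rintro ⟨ψ, hψ⟩ -
    obtain ⟨A, hA⟩ := hspan ψ hψ
    have hrep : (⟨ψ, hψ⟩ : E12) = ∑ j ∈ S.attach, A (j:ℕ) • fam j := by
      apply Subtype.ext
      show ψ = ((∑ j ∈ S.attach, A (j:ℕ) • fam j : E12) : Vv →ₗ[F] W)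
      rw [hA, ← Finset.sum_attach S (fun j => A j • φf j)]
      rw [AddSubmonoidClass.coe_finset_sum]
      rfl
    rw [hrep]
    apply Submodule.sum_mem
    intro j _
    exact Submodule.smul_mem _ _ (Submodule.subset_span ⟨j, rfl⟩)
  set bE : Module.Basis {x // x ∈ S} F E12 := Module.Basis.mk hfamind hfamspan with hbEdef
  have heigE : ∀ j : {x // x ∈ S}, (H12.restrict hinv12) (bE j)
      = (((lam1:F) + (lam2:F)) - 2*((j:ℕ):F)) • bE j := by
    intro j
    apply Subtype.ext
    rw [hbEdef, Module.Basis.mk_apply]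
    show ((H12.restrict hinv12) (fam j) : Vv →ₗ[F] W)
      = (((((lam1:F) + (lam2:F)) - 2*((j:ℕ):F)) • fam j : E12) : Vv →ₗ[F] W)
    rw [LinearMap.restrict_coe_apply]
    show H12 (φf (j:ℕ)) = _
    rw [heigv _ (hSmem _ j.2).1 (hSmem _ j.2).2.1]
    rfl
  rw [trace_eq_sum_of_eigenbasis bE _ _ heigE]
  exact Finset.sum_coe_sort S (fun j => ((lam1:F)+(lam2:F)) - 2*(j:F))

section sums
variable {F : Type*} [Field F] [CharZero F]

lemma sum_all (X : F) (n : ℕ) :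
    ∑ j ∈ Finset.range n, (X - 2*(j:F)) = (n:F)*X - ((n:F)^2 - n) := by
  rw [Finset.sum_sub_distrib, Finset.sum_const, Finset.card_range, nsmul_eq_mul,
    ← Finset.mul_sum]
  linear_combination (-1:F) * gauss (F := F) n

lemma sum_even (X : F) (N : ℕ) :
    ∑ t ∈ Finset.range N, (X - 2*(((2*t : ℕ)):F)) = (N:F)*X - 2*((N:F)^2 - N) := by
  have h1 : ∀ t ∈ Finset.range N, (X - 2*(((2*t : ℕ)):F)) = X - 4*(t:F) := by
    intro t _; push_cast; ring
  rw [Finset.sum_congr rfl h1, Finset.sum_sub_distrib, Finset.sum_const, Finset.card_range,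
    nsmul_eq_mul, ← Finset.mul_sum]
  linear_combination (-2:F) * gauss (F := F) N

lemma sum_odd (X : F) (N : ℕ) :
    ∑ t ∈ Finset.range N, (X - 2*(((2*t+1 : ℕ)):F))
      = (N:F)*X - 2*((N:F)^2 - N) - 2*N := by
  have h1 : ∀ t ∈ Finset.range N, (X - 2*(((2*t+1 : ℕ)):F)) = X - 4*(t:F) - 2 := by
    intro t _; push_cast; ring
  rw [Finset.sum_congr rfl h1]
  have h2 : ∀ t ∈ Finset.range N, X - 4*(t:F) - 2 = (X - 2) - 4*(t:F) := by
    intro t _; ring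
  rw [Finset.sum_congr rfl h2, Finset.sum_sub_distrib, Finset.sum_const, Finset.card_range,
    nsmul_eq_mul, ← Finset.mul_sum]
  linear_combination (-2:F) * gauss (F := F) N

end sums


/-- With W1 = V_{λ1}^{w1}, W2 = V_{λ2}^{w2} irreducible graded
sl2-representations of dimensions r1 = λ1+1, r2 = λ2+1, the quantity
m = Tr(h | (Hom(W1,W2)^e)_0) + Tr(h | (Hom(W2,W1)^e)_0) − r1·r2 is given by the
case formula of Lemma `mij`. -/
theorem stmt12 {K V W : Type*} [Field K] [CharZero K]
    [AddCommGroup V] [Module K V] [FiniteDimensional K V] [Nontrivial V]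
    [AddCommGroup W] [Module K W] [FiniteDimensional K W] [Nontrivial W]
    (eV hV fV : Module.End K V) (hrelV : Sl2Rel eV hV fV)
    (V0 V1 : Submodule K V) (hgrV : Sl2Grading eV hV fV V0 V1)
    (hirrV : ∀ U : Submodule K V, Sl2Inv eV hV fV U → U = ⊥ ∨ U = ⊤)
    (lam1 : ℕ) (w1 : ZMod 2)
    (v : V) (hv : v ≠ 0) (hve : eV v = 0) (hvh : hV v = (lam1 : K) • v)
    (hvpar : if w1 = 0 then v ∈ V0 else v ∈ V1)
    (eW hW fW : Module.End K W) (hrelW : Sl2Rel eW hW fW)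
    (W0 W1 : Submodule K W) (hgrW : Sl2Grading eW hW fW W0 W1)
    (hirrW : ∀ U : Submodule K W, Sl2Inv eW hW fW U → U = ⊥ ∨ U = ⊤)
    (lam2 : ℕ) (w2 : ZMod 2)
    (w : W) (hw : w ≠ 0) (hwe : eW w = 0) (hwh : hW w = (lam2 : K) • w)
    (hwpar : if w2 = 0 then w ∈ W0 else w ∈ W1)
    -- the actions of h on Hom(W1,W2) and Hom(W2,W1)
    (H12 : Module.End K (V →ₗ[K] W)) (hH12 : ∀ φ, H12 φ = hW ∘ₗ φ - φ ∘ₗ hV)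
    (H21 : Module.End K (W →ₗ[K] V)) (hH21 : ∀ ψ, H21 ψ = hV ∘ₗ ψ - ψ ∘ₗ hW)
    -- the even parts of the kernels of the action of e on the Hom spaces
    (E12 : Submodule K (V →ₗ[K] W))
    (hE12 : ∀ φ : V →ₗ[K] W, φ ∈ E12 ↔
      (eW ∘ₗ φ - φ ∘ₗ eV = 0 ∧ (∀ x ∈ V0, φ x ∈ W0) ∧ (∀ x ∈ V1, φ x ∈ W1)))
    (E21 : Submodule K (W →ₗ[K] V))
    (hE21 : ∀ ψ : W →ₗ[K] V, ψ ∈ E21 ↔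
      (eV ∘ₗ ψ - ψ ∘ₗ eW = 0 ∧ (∀ x ∈ W0, ψ x ∈ V0) ∧ (∀ x ∈ W1, ψ x ∈ V1)))
    (hinv12 : ∀ φ ∈ E12, H12 φ ∈ E12) (hinv21 : ∀ ψ ∈ E21, H21 ψ ∈ E21)
    -- the quantity m, with r1 = λ1 + 1 and r2 = λ2 + 1
    (r1 r2 : ℕ) (hr1 : r1 = lam1 + 1) (hr2 : r2 = lam2 + 1)
    (m : K)
    (hm : m = LinearMap.trace K _ (H12.restrict hinv12) +
              LinearMap.trace K _ (H21.restrict hinv21) - ((r1 * r2 : ℕ) : K)) :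
    (r1 % 2 ≠ r2 % 2 → m = -((min r1 r2 : ℕ) : K)) ∧
    (r1 % 2 = 0 → r2 % 2 = 0 → w1 = w2 → m = -(2 * ((min r1 r2 : ℕ) : K))) ∧
    (r1 % 2 = 0 → r2 % 2 = 0 → w1 ≠ w2 → m = 0) ∧
    (r1 % 2 = 1 → r2 % 2 = 1 → w1 = w2 → m = ((max r1 r2 - min r1 r2 : ℕ) : K) - 1) ∧
    (r1 % 2 = 1 → r2 % 2 = 1 → w1 ≠ w2 → m = -((r1 : K) + (r2 : K) - 1)) := by
  have hzmod : ∀ a : ZMod 2, a + a = 0 := by decide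
  have hzmodne : ∀ a b : ZMod 2, a ≠ b → a + b = 1 := by decide
  have hnotc : ∀ x c : ZMod 2, (x = c + 1) ↔ ¬(x = c) := by decide
  have hparv1 : ∀ n : ℕ, n % 2 = 1 → (n : ZMod 2) = 1 := by
    intro n hn
    have := (ZMod.natCast_eq_natCast_iff' n 1 2).mpr (by omega)
    simpa using this
  have hparv0 : ∀ n : ℕ, n % 2 = 0 → (n : ZMod 2) = 0 := by
    intro n hn
    have := (ZMod.natCast_eq_natCast_iff' n 0 2).mpr (by omega)
    simpa using this
  have hvp : v ∈ (if w1 = 0 then V0 else V1) := by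
    split_ifs with h
    · rwa [if_pos h] at hvpar
    · rwa [if_neg h] at hvpar
  have hwp : w ∈ (if w2 = 0 then W0 else W1) := by
    split_ifs with h
    · rwa [if_pos h] at hwpar
    · rwa [if_neg h] at hwpar
  obtain ⟨SV⟩ := sl2string_exists eV hV fV hrelV V0 V1 hgrV hirrV lam1 w1 v hv hve hvh hvp
  obtain ⟨SW⟩ := sl2string_exists eW hW fW hrelW W0 W1 hgrW hirrW lam2 w2 w hw hwe hwh hwp
  have hT12 := homE_trace SV SW hgrV.1 hgrW.1 H12 hH12 E12 hE12 hinv12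
  have hT21 := homE_trace SW SV hgrW.1 hgrV.1 H21 hH21 E21 hE21 hinv21
  rw [show (lam2:K) + (lam1:K) = (lam1:K) + (lam2:K) from add_comm _ _] at hT21
  set μ := min r1 r2 with hμdef
  set M := max r1 r2 with hMdef
  have hμ12 : min (lam1+1) (lam2+1) = μ := by rw [hμdef, hr1, hr2]
  have hμ21 : min (lam2+1) (lam1+1) = μ := by rw [hμdef, hr1, hr2, min_comm]
  rw [hμ12] at hT12
  rw [hμ21] at hT21
  set X : K := (lam1:K) + (lam2:K) with hXdef
  have hX : X = (r1:K) + (r2:K) - 2 := by rw [hXdef, hr1, hr2]; push_cast; ring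
  have hrr : ((r1*r2:ℕ):K) = (μ:K) * (M:K) := by
    have h1 : μ * M = r1 * r2 := by
      rw [hμdef, hMdef]
      rcases le_total r1 r2 with h | h
      · rw [min_eq_left h, max_eq_right h]
      · rw [min_eq_right h, max_eq_left h]; ring
    rw [← h1]
    push_cast
    ring
  have hμM : (μ:K) + (M:K) = (r1:K) + (r2:K) := by
    have h1 : μ + M = r1 + r2 := by rw [hμdef, hMdef]; omega
    exact_mod_cast h1
  refine ⟨?_, ?_, ?_, ?_, ?_⟩
  · -- case 1 : opposite parities
    intro hne
    have hlam : lam1 % 2 ≠ lam2 % 2 := by omega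
    have hshift : w2 + w1 + (lam2 : ZMod 2) = (w1 + w2 + (lam1 : ZMod 2)) + 1 := by
      rcases Nat.even_or_odd lam1 with he | ho
      · obtain ⟨k, hk⟩ := he
        rw [hparv0 lam1 (by omega), hparv1 lam2 (by omega)]
        ring
      · obtain ⟨k, hk⟩ := ho
        rw [hparv1 lam1 (by omega), hparv0 lam2 (by omega)]
        linear_combination - hzmod (1 : ZMod 2)
    have e21 : (Finset.range μ).filter (fun j : ℕ => ((j:ZMod 2) = w2 + w1 + (lam2 : ZMod 2)))
        = (Finset.range μ).filter (fun j : ℕ => ¬((j:ZMod 2) = w1 + w2 + (lam1 : ZMod 2))) := by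
      apply Finset.filter_congr
      intro j _
      rw [hshift, hnotc]
    rw [e21] at hT21
    have hsplit := Finset.sum_filter_add_sum_filter_not (Finset.range μ)
      (fun j : ℕ => ((j:ZMod 2) = w1 + w2 + (lam1 : ZMod 2)))
      (fun j : ℕ => X - 2*(j:K))
    rw [hm, hT12, hT21, hsplit, sum_all]
    linear_combination (μ:K) * hX - (μ:K) * hμM - hrr
  · -- case 2 : both even, same parity
    intro h1 h2 h12
    have hl1 : (lam1 : ZMod 2) = 1 := hparv1 lam1 (by omega)
    have hl2 : (lam2 : ZMod 2) = 1 := hparv1 lam2 (by omega)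
    have hww : w1 + w2 = 0 := by rw [h12]; exact hzmod w2
    have hε1 : w1 + w2 + (lam1 : ZMod 2) = 1 := by rw [hww, hl1]; ring
    have hε2 : w2 + w1 + (lam2 : ZMod 2) = 1 := by rw [add_comm w2 w1, hww, hl2]; ring
    obtain ⟨N, hN⟩ : ∃ N, μ = 2*N := ⟨μ/2, by omega⟩
    have e12 : (Finset.range μ).filter (fun j : ℕ => ((j:ZMod 2) = w1 + w2 + (lam1 : ZMod 2)))
        = (Finset.range μ).filter (fun j : ℕ => ((j:ZMod 2) = 1)) :=
      Finset.filter_congr (fun j _ => by rw [hε1])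
    have e21 : (Finset.range μ).filter (fun j : ℕ => ((j:ZMod 2) = w2 + w1 + (lam2 : ZMod 2)))
        = (Finset.range μ).filter (fun j : ℕ => ((j:ZMod 2) = 1)) :=
      Finset.filter_congr (fun j _ => by rw [hε2])
    rw [e12] at hT12
    rw [e21] at hT21
    have hsum := (filter_parity_sum (fun j : ℕ => X - 2*(j:K)) μ).2
    rw [hN, show (2*N)/2 = N from by omega] at hsum
    rw [← hN] at hsum
    rw [hm, hT12, hT21, hsum, sum_odd]
    have hNμ : (μ:K) = 2*(N:K) := by rw [hN]; push_cast; ring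
    linear_combination (μ:K) * hX - (μ:K) * hμM - hrr - (X - (μ:K) - 2*(N:K)) * hNμ
  · -- case 3 : both even, different parity
    intro h1 h2 h12
    have hl1 : (lam1 : ZMod 2) = 1 := hparv1 lam1 (by omega)
    have hl2 : (lam2 : ZMod 2) = 1 := hparv1 lam2 (by omega)
    have hww : w1 + w2 = 1 := hzmodne _ _ h12
    have hε1 : w1 + w2 + (lam1 : ZMod 2) = 0 := by rw [hww, hl1]; decide
    have hε2 : w2 + w1 + (lam2 : ZMod 2) = 0 := by rw [add_comm w2 w1, hww, hl2]; decide
    obtain ⟨N, hN⟩ : ∃ N, μ = 2*N := ⟨μ/2, by omega⟩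
    have e12 : (Finset.range μ).filter (fun j : ℕ => ((j:ZMod 2) = w1 + w2 + (lam1 : ZMod 2)))
        = (Finset.range μ).filter (fun j : ℕ => ((j:ZMod 2) = 0)) :=
      Finset.filter_congr (fun j _ => by rw [hε1])
    have e21 : (Finset.range μ).filter (fun j : ℕ => ((j:ZMod 2) = w2 + w1 + (lam2 : ZMod 2)))
        = (Finset.range μ).filter (fun j : ℕ => ((j:ZMod 2) = 0)) :=
      Finset.filter_congr (fun j _ => by rw [hε2])
    rw [e12] at hT12
    rw [e21] at hT21
    have hsum := (filter_parity_sum (fun j : ℕ => X - 2*(j:K)) μ).1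
    rw [hN, show (2*N+1)/2 = N from by omega] at hsum
    rw [← hN] at hsum
    rw [hm, hT12, hT21, hsum, sum_even]
    have hNμ : (μ:K) = 2*(N:K) := by rw [hN]; push_cast; ring
    linear_combination (μ:K) * hX - (μ:K) * hμM - hrr + ((μ:K) + 2*(N:K) - 2 - X) * hNμ
  · -- case 4 : both odd, same parity
    intro h1 h2 h12
    have hl1 : (lam1 : ZMod 2) = 0 := hparv0 lam1 (by omega)
    have hl2 : (lam2 : ZMod 2) = 0 := hparv0 lam2 (by omega)
    have hww : w1 + w2 = 0 := by rw [h12]; exact hzmod w2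
    have hε1 : w1 + w2 + (lam1 : ZMod 2) = 0 := by rw [hww, hl1]; decide
    have hε2 : w2 + w1 + (lam2 : ZMod 2) = 0 := by rw [add_comm w2 w1, hww, hl2]; decide
    obtain ⟨N, hN⟩ : ∃ N, μ = 2*N+1 := ⟨μ/2, by omega⟩
    have e12 : (Finset.range μ).filter (fun j : ℕ => ((j:ZMod 2) = w1 + w2 + (lam1 : ZMod 2)))
        = (Finset.range μ).filter (fun j : ℕ => ((j:ZMod 2) = 0)) :=
      Finset.filter_congr (fun j _ => by rw [hε1])
    have e21 : (Finset.range μ).filter (fun j : ℕ => ((j:ZMod 2) = w2 + w1 + (lam2 : ZMod 2)))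
        = (Finset.range μ).filter (fun j : ℕ => ((j:ZMod 2) = 0)) :=
      Finset.filter_congr (fun j _ => by rw [hε2])
    rw [e12] at hT12
    rw [e21] at hT21
    have hsum := (filter_parity_sum (fun j : ℕ => X - 2*(j:K)) μ).1
    rw [hN, show (2*N+1+1)/2 = N+1 from by omega] at hsum
    rw [← hN] at hsum
    rw [hm, hT12, hT21, hsum, sum_even]
    have hNμ : (μ:K) = 2*(N:K)+1 := by rw [hN]; push_cast; ring
    have hMm : ((M - μ : ℕ) : K) = (M:K) - (μ:K) := by
      have : μ ≤ M := by rw [hμdef, hMdef]; omega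
      rw [Nat.cast_sub this]
    rw [hMm]
    linear_combination (norm := (push_cast; ring1)) ((μ:K)+1) * hX - ((μ:K)+1) * hμM - hrr + (-X + (μ:K) + 2*(N:K) + 1) * hNμ
  · -- case 5 : both odd, different parity
    intro h1 h2 h12
    have hl1 : (lam1 : ZMod 2) = 0 := hparv0 lam1 (by omega)
    have hl2 : (lam2 : ZMod 2) = 0 := hparv0 lam2 (by omega)
    have hww : w1 + w2 = 1 := hzmodne _ _ h12
    have hε1 : w1 + w2 + (lam1 : ZMod 2) = 1 := by rw [hww, hl1]; decide
    have hε2 : w2 + w1 + (lam2 : ZMod 2) = 1 := by rw [add_comm w2 w1, hww, hl2]; decide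
    obtain ⟨N, hN⟩ : ∃ N, μ = 2*N+1 := ⟨μ/2, by omega⟩
    have e12 : (Finset.range μ).filter (fun j : ℕ => ((j:ZMod 2) = w1 + w2 + (lam1 : ZMod 2)))
        = (Finset.range μ).filter (fun j : ℕ => ((j:ZMod 2) = 1)) :=
      Finset.filter_congr (fun j _ => by rw [hε1])
    have e21 : (Finset.range μ).filter (fun j : ℕ => ((j:ZMod 2) = w2 + w1 + (lam2 : ZMod 2)))
        = (Finset.range μ).filter (fun j : ℕ => ((j:ZMod 2) = 1)) :=
      Finset.filter_congr (fun j _ => by rw [hε2])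
    rw [e12] at hT12
    rw [e21] at hT21
    have hsum := (filter_parity_sum (fun j : ℕ => X - 2*(j:K)) μ).2
    rw [hN, show (2*N+1)/2 = N from by omega] at hsum
    rw [← hN] at hsum
    rw [hm, hT12, hT21, hsum, sum_odd]
    have hNμ : (μ:K) = 2*(N:K)+1 := by rw [hN]; push_cast; ring
    linear_combination ((μ:K)-1) * hX - (μ:K) * hμM - hrr + (-X + (μ:K) + 2*(N:K) - 1) * hNμ
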